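/- Let 0 < α < 1 and define m : ℝ → ℝ by m(y) := (α/Γ(1−α)) · ∫₀^∞ (4πs)^{−1/2} exp(−y²/(4s)) · e^{−s} s^{−1−α} ds. Then for every real ξ, (1+ξ²)^α = 1 + ∫_ℝ (1 − cos(yξ)) · m(y) dy. -/

import Mathlib

open MeasureTheory Real Set Filter

/-- The Lévy density `m(y) = (α/Γ(1−α)) ∫₀^∞ (4πs)^{−1/2} e^{−y²/(4s)} e^{−s} s^{−1−α} ds`. -/
noncomputable def levyDensity (α : ℝ) (y : ℝ) : ℝ :=
  α / Real.Gamma (1 - α) *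
    ∫ s in Set.Ioi (0 : ℝ),
      (4 * Real.pi * s) ^ (-(1 / 2) : ℝ) * Real.exp (-y ^ 2 / (4 * s)) *
        Real.exp (-s) * s ^ (-1 - α)

lemma one_sub_exp_neg_le (x : ℝ) : 1 - Real.exp (-x) ≤ x := by
  have := Real.add_one_le_exp (-x); linarith

lemma one_sub_exp_nonneg {x : ℝ} (hx : 0 ≤ x) : 0 ≤ 1 - Real.exp (-x) := by
  have : Real.exp (-x) ≤ Real.exp 0 := Real.exp_le_exp.mpr (by linarith)
  simpa using this

lemma integrableA {α l : ℝ} (hα : 0 < α) (hα' : α < 1) (hl : 0 ≤ l) :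
    IntegrableOn (fun s : ℝ => (1 - Real.exp (-(l * s))) * s ^ (-1 - α)) (Ioi 0) := by
  have hmeas : AEStronglyMeasurable
      (fun s : ℝ => (1 - Real.exp (-(l * s))) * s ^ (-1 - α)) volume := by
    apply Measurable.aestronglyMeasurable; fun_prop
  have h01 : IntegrableOn (fun s : ℝ => (1 - Real.exp (-(l * s))) * s ^ (-1 - α)) (Ioo 0 1) := by
    have hbound : IntegrableOn (fun s : ℝ => l * s ^ (-α)) (Ioo 0 1) :=
      (((intervalIntegral.integrableOn_Ioo_rpow_iff one_pos).2 (by linarith)).const_mul l)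
    refine hbound.mono' hmeas.restrict ?_
    filter_upwards [ae_restrict_mem measurableSet_Ioo] with s hs
    have hs0 : 0 < s := hs.1
    have h1 : 0 ≤ 1 - Real.exp (-(l * s)) := one_sub_exp_nonneg (by positivity)
    rw [Real.norm_of_nonneg (mul_nonneg h1 (Real.rpow_nonneg hs0.le _))]
    have h2 : 1 - Real.exp (-(l * s)) ≤ l * s := one_sub_exp_neg_le _
    calc (1 - Real.exp (-(l * s))) * s ^ (-1 - α) ≤ (l * s) * s ^ (-1 - α) := by
          exact mul_le_mul_of_nonneg_right h2 (Real.rpow_nonneg hs0.le _)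
      _ = l * s ^ (-α) := by
          rw [mul_assoc]
          congr 1
          rw [← Real.rpow_one_add' hs0.le (by intro h; apply hα.ne'; linarith)]
          congr 1; ring
  have h1i : IntegrableOn (fun s : ℝ => (1 - Real.exp (-(l * s))) * s ^ (-1 - α)) (Ici 1) := by
    rw [integrableOn_Ici_iff_integrableOn_Ioi]
    have hbound : IntegrableOn (fun s : ℝ => s ^ (-1 - α)) (Ioi 1) :=
      integrableOn_Ioi_rpow_of_lt (by linarith) one_pos
    refine hbound.mono' hmeas.restrict ?_
    filter_upwards [ae_restrict_mem measurableSet_Ioi] with s hs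
    have hs0 : (0:ℝ) < s := lt_trans one_pos hs
    have h1 : 0 ≤ 1 - Real.exp (-(l * s)) := one_sub_exp_nonneg (by positivity)
    rw [Real.norm_of_nonneg (mul_nonneg h1 (Real.rpow_nonneg hs0.le _))]
    have h2 : 1 - Real.exp (-(l * s)) ≤ 1 := by
      have := Real.exp_pos (-(l * s)); linarith
    nlinarith [Real.rpow_nonneg hs0.le (-1 - α)]
  have : Ioo (0:ℝ) 1 ∪ Ici 1 = Ioi 0 := Ioo_union_Ici_eq_Ioi one_pos
  rw [← this]
  exact h01.union h1i

lemma integrableG {α l : ℝ} (hα : 0 < α) (hα' : α < 1) (hl : 0 < l) :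
    IntegrableOn (fun s : ℝ => Real.exp (-(l * s)) * s ^ (-α)) (Ioi 0) := by
  have hmeas : AEStronglyMeasurable (fun s : ℝ => Real.exp (-(l * s)) * s ^ (-α)) volume := by
    apply Measurable.aestronglyMeasurable; fun_prop
  have h01 : IntegrableOn (fun s : ℝ => Real.exp (-(l * s)) * s ^ (-α)) (Ioo 0 1) := by
    have hbound : IntegrableOn (fun s : ℝ => s ^ (-α)) (Ioo 0 1) :=
      (intervalIntegral.integrableOn_Ioo_rpow_iff one_pos).2 (by linarith)
    refine hbound.mono' hmeas.restrict ?_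
    filter_upwards [ae_restrict_mem measurableSet_Ioo] with s hs
    have hs0 : 0 < s := hs.1
    rw [Real.norm_of_nonneg (by positivity)]
    have : Real.exp (-(l * s)) ≤ 1 := by
      have := Real.exp_le_exp.mpr (show -(l * s) ≤ 0 by nlinarith); simpa using this
    nlinarith [Real.rpow_nonneg hs0.le (-α)]
  have h1i : IntegrableOn (fun s : ℝ => Real.exp (-(l * s)) * s ^ (-α)) (Ici 1) := by
    rw [integrableOn_Ici_iff_integrableOn_Ioi]
    have hbound : IntegrableOn (fun s : ℝ => Real.exp (-l * s)) (Ioi 1) :=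
      exp_neg_integrableOn_Ioi 1 hl
    refine hbound.mono' hmeas.restrict ?_
    filter_upwards [ae_restrict_mem measurableSet_Ioi] with s hs
    have hs0 : (0:ℝ) < s := lt_trans one_pos hs
    rw [Real.norm_of_nonneg (by positivity)]
    have h2 : s ^ (-α) ≤ 1 := Real.rpow_le_one_of_one_le_of_nonpos hs.le (by linarith)
    rw [neg_mul]
    nlinarith [Real.exp_pos (-(l*s))]
  have : Ioo (0:ℝ) 1 ∪ Ici 1 = Ioi 0 := Ioo_union_Ici_eq_Ioi one_pos
  rw [← this]
  exact h01.union h1i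

section GaussCos
open Complex

lemma gauss_cos {b : ℝ} (hb : 0 < b) (ξ : ℝ) :
    ∫ y : ℝ, Real.cos (y * ξ) * Real.exp (-(b * y ^ 2))
      = Real.sqrt (Real.pi / b) * Real.exp (-ξ ^ 2 / (4 * b)) := by
  have hbc : (0:ℝ) < (b:ℂ).re := by simpa using hb
  have key := fourierIntegral_gaussian (b := (b:ℂ)) hbc (ξ : ℂ)
  have hint : Integrable (fun x : ℝ => cexp (I * (ξ:ℂ) * x) * cexp (-(b:ℂ) * x ^ 2)) := by
    have h2 := integrable_cexp_quadratic hbc (I * (ξ:ℂ)) 0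
    refine h2.congr (Filter.Eventually.of_forall fun x => ?_)
    simp only [← Complex.exp_add]
    congr 1; ring
  have hre := integral_re hint
  simp only [RCLike.re_to_complex] at hre
  rw [key] at hre
  have hL : ∀ x : ℝ, (cexp (I * (ξ:ℂ) * x) * cexp (-(b:ℂ) * x ^ 2)).re
      = Real.cos (x * ξ) * Real.exp (-(b * x ^ 2)) := by
    intro x
    have h1 : cexp (-(b:ℂ) * x ^ 2) = (Real.exp (-(b * x ^ 2)) : ℝ) := by
      rw [Complex.ofReal_exp]; congr 1; push_cast; ring
    have h2 : cexp (I * (ξ:ℂ) * x) = cexp ((x * ξ : ℝ) * I) := by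
      congr 1; push_cast; ring
    rw [h1, h2, mul_comm, Complex.re_ofReal_mul, Complex.exp_ofReal_mul_I_re]
    ring
  rw [show (∫ a : ℝ, (cexp (I * (ξ:ℂ) * a) * cexp (-(b:ℂ) * a ^ 2)).re)
      = ∫ a : ℝ, Real.cos (a * ξ) * Real.exp (-(b * a ^ 2)) from by
    exact integral_congr_ae (Filter.Eventually.of_forall fun x => hL x)] at hre
  rw [hre]
  have hπb : (0:ℝ) ≤ Real.pi / b := by positivity
  have h4 : cexp (-(ξ:ℂ) ^ 2 / (4 * (b:ℂ))) = (Real.exp (-ξ ^ 2 / (4 * b)) : ℝ) := by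
    rw [Complex.ofReal_exp]; congr 1; push_cast; ring
  rw [show ((Real.pi :ℂ) / (b:ℂ)) = ((Real.pi / b : ℝ) : ℂ) by push_cast; ring,
    show (1 / 2 : ℂ) = ((1 / 2 : ℝ) : ℂ) by norm_num,
    ← Complex.ofReal_cpow hπb, h4,
    ← Complex.ofReal_mul, Complex.ofReal_re, Real.sqrt_eq_rpow]

end GaussCos

lemma valueA {α l : ℝ} (hα : 0 < α) (hα' : α < 1) (hl : 0 < l) :
    ∫ s in Ioi (0:ℝ), (1 - Real.exp (-(l * s))) * s ^ (-1 - α)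
      = Real.Gamma (1 - α) * l ^ α / α := by
  set g : ℝ → ℝ := fun s => -α⁻¹ * ((1 - Real.exp (-(l * s))) * s ^ (-α)) with hg
  set g' : ℝ → ℝ := fun s =>
    (1 - Real.exp (-(l * s))) * s ^ (-1 - α) - l / α * (Real.exp (-(l * s)) * s ^ (-α)) with hg'
  -- squeeze helper
  have hsqueeze : ∀ s : ℝ, 0 ≤ s →
      0 ≤ (1 - Real.exp (-(l * s))) * s ^ (-α) ∧
      (1 - Real.exp (-(l * s))) * s ^ (-α) ≤ l * s ^ (1 - α) := by
    intro s hs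
    rcases eq_or_lt_of_le hs with rfl | hs0
    · simp [Real.zero_rpow (by linarith : -α ≠ 0), Real.zero_rpow (by linarith : 1 - α ≠ 0)]
    constructor
    · exact mul_nonneg (one_sub_exp_nonneg (by positivity)) (Real.rpow_nonneg hs0.le _)
    · calc (1 - Real.exp (-(l * s))) * s ^ (-α) ≤ (l * s) * s ^ (-α) :=
            mul_le_mul_of_nonneg_right (one_sub_exp_neg_le _) (Real.rpow_nonneg hs0.le _)
        _ = l * s ^ (1 - α) := by
            rw [mul_assoc]; congr 1
            rw [show (1:ℝ) - α = 1 + -α from by ring]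
            exact (Real.rpow_one_add' hs0.le (by intro h; apply hα'.ne; linarith)).symm
  have hh0 : Filter.Tendsto (fun s => (1 - Real.exp (-(l * s))) * s ^ (-α))
      (nhdsWithin 0 (Ici 0)) (nhds 0) := by
    have hup : Filter.Tendsto (fun s : ℝ => l * s ^ (1 - α)) (nhdsWithin 0 (Ici 0)) (nhds 0) := by
      have hc : ContinuousAt (fun s : ℝ => s ^ (1 - α)) 0 :=
        Real.continuousAt_rpow_const 0 _ (Or.inr (by linarith))
      have := (hc.continuousWithinAt (s := Ici 0)).tendsto
      rw [Real.zero_rpow (by linarith : (1:ℝ) - α ≠ 0)] at this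
      simpa using (this.const_mul l)
    refine squeeze_zero' ?_ ?_ hup
    · filter_upwards [self_mem_nhdsWithin] with s hs using (hsqueeze s hs).1
    · filter_upwards [self_mem_nhdsWithin] with s hs using (hsqueeze s hs).2
  have hcont : ContinuousWithinAt g (Ici 0) 0 := by
    have : Filter.Tendsto g (nhdsWithin 0 (Ici 0)) (nhds (-α⁻¹ * 0)) := hh0.const_mul _
    have hg0 : g 0 = 0 := by simp [hg]
    rw [ContinuousWithinAt, hg0]
    simpa using this
  have hinf : Filter.Tendsto g Filter.atTop (nhds 0) := by
    have hh : Filter.Tendsto (fun s => (1 - Real.exp (-(l * s))) * s ^ (-α))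
        Filter.atTop (nhds 0) := by
      refine squeeze_zero' ?_ ?_ (tendsto_rpow_neg_atTop hα)
      · filter_upwards [Filter.eventually_ge_atTop (0:ℝ)] with s hs using (hsqueeze s hs).1
      · filter_upwards [Filter.eventually_ge_atTop (0:ℝ)] with s hs
        have h1 : 1 - Real.exp (-(l * s)) ≤ 1 := by
          have := Real.exp_pos (-(l * s)); linarith
        nlinarith [Real.rpow_nonneg hs (-α), one_sub_exp_nonneg (show 0 ≤ l*s by positivity)]
    have : Filter.Tendsto g Filter.atTop (nhds (-α⁻¹ * 0)) := hh.const_mul _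
    simpa using this
  have hderiv : ∀ x ∈ Ioi (0:ℝ), HasDerivAt g (g' x) x := by
    intro x hx
    have hx0 : 0 < x := hx
    have h1 : HasDerivAt (fun s : ℝ => 1 - Real.exp (-(l * s)))
        (-(Real.exp (-(l * x)) * -(l * 1))) x :=
      (((hasDerivAt_id x).const_mul l).neg.exp).const_sub 1
    have h2 : HasDerivAt (fun s : ℝ => s ^ (-α)) (-α * x ^ (-α - 1)) x :=
      Real.hasDerivAt_rpow_const (Or.inl hx0.ne')
    have h3 := (h1.mul h2).const_mul (-α⁻¹)
    refine h3.congr_deriv ?_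
    have hexp : x ^ (-1 - α) = x ^ (-α - 1) := by ring_nf
    rw [hg']
    simp only [hexp]
    field_simp
    ring
  have hint : IntegrableOn g' (Ioi 0) :=
    (integrableA hα hα' hl.le).sub ((integrableG hα hα' hl).const_mul (l / α))
  have key : ∫ s in Ioi (0:ℝ), g' s = 0 - g 0 :=
    integral_Ioi_of_hasDerivAt_of_tendsto hcont hderiv hint hinf
  have hg0 : g 0 = 0 := by simp [hg]
  rw [hg0, sub_zero] at key
  have hsplit : ∫ s in Ioi (0:ℝ), (1 - Real.exp (-(l * s))) * s ^ (-1 - α)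
      = (∫ s in Ioi (0:ℝ), g' s) + l / α * ∫ s in Ioi (0:ℝ), Real.exp (-(l * s)) * s ^ (-α) := by
    rw [← MeasureTheory.integral_const_mul, ← MeasureTheory.integral_add hint
      (((integrableG hα hα' hl).const_mul (l / α)))]
    refine integral_congr_ae (Filter.Eventually.of_forall fun s => ?_)
    simp only [hg']; ring
  have hGamma : ∫ s in Ioi (0:ℝ), Real.exp (-(l * s)) * s ^ (-α)
      = (1 / l) ^ (1 - α) * Real.Gamma (1 - α) := by
    rw [← Real.integral_rpow_mul_exp_neg_mul_Ioi (by linarith : (0:ℝ) < 1 - α) hl]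
    refine integral_congr_ae (Filter.Eventually.of_forall fun s => ?_)
    rw [show (1:ℝ) - α - 1 = -α by ring]; ring
  rw [hsplit, key, hGamma, zero_add]
  have h1 : (1 / l : ℝ) ^ (1 - α) = l ^ (α - 1) := by
    rw [one_div, Real.inv_rpow hl.le, ← Real.rpow_neg hl.le]
    congr 1; ring
  have h2 : l * l ^ (α - 1) = l ^ α := by
    have h3 := (Real.rpow_add hl 1 (α - 1)).symm
    rw [Real.rpow_one] at h3
    rw [h3]; congr 1; ring
  rw [h1]
  field_simp
  linear_combination Real.Gamma (1 - α) * h2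

lemma measAux (α ξ : ℝ) : Measurable (fun p : ℝ × ℝ =>
    (1 - Real.cos (p.1 * ξ)) * ((4 * Real.pi * p.2) ^ (-(1 / 2) : ℝ) *
      Real.exp (-p.1 ^ 2 / (4 * p.2)) * Real.exp (-p.2) * p.2 ^ (-1 - α))) := by
  fun_prop

lemma innerB {s : ℝ} (hs : 0 < s) (ξ : ℝ) :
    ∫ y : ℝ, (1 - Real.cos (y * ξ)) *
        ((4 * Real.pi * s) ^ (-(1 / 2) : ℝ) * Real.exp (-y ^ 2 / (4 * s)))
      = 1 - Real.exp (-(ξ ^ 2 * s)) := by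
  set b : ℝ := (4 * s)⁻¹ with hbdef
  have hb : 0 < b := by positivity
  set A : ℝ := (4 * Real.pi * s) ^ (-(1 / 2) : ℝ) with hA
  have hg : Integrable (fun y : ℝ => Real.exp (-(b * y ^ 2))) := by
    simpa [neg_mul] using integrable_exp_neg_mul_sq hb
  have hcg : Integrable (fun y : ℝ => Real.cos (y * ξ) * Real.exp (-(b * y ^ 2))) := by
    refine hg.mono' (by apply Measurable.aestronglyMeasurable; fun_prop) ?_
    refine Filter.Eventually.of_forall fun y => ?_
    rw [norm_mul, Real.norm_of_nonneg (Real.exp_pos _).le, Real.norm_eq_abs]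
    have h1 : |Real.cos (y * ξ)| ≤ 1 := Real.abs_cos_le_one _
    nlinarith [Real.exp_pos (-(b * y ^ 2))]
  have hπb : Real.pi / b = 4 * Real.pi * s := by
    rw [hbdef]; field_simp
  have hξb : -ξ ^ 2 / (4 * b) = -(ξ ^ 2 * s) := by
    rw [hbdef]; field_simp
  calc ∫ y : ℝ, (1 - Real.cos (y * ξ)) * (A * Real.exp (-y ^ 2 / (4 * s)))
      = ∫ y : ℝ, A * (Real.exp (-(b * y ^ 2)) - Real.cos (y * ξ) * Real.exp (-(b * y ^ 2))) := by
        refine integral_congr_ae (Filter.Eventually.of_forall fun y => ?_)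
        dsimp only
        rw [show -y ^ 2 / (4 * s) = -(b * y ^ 2) by rw [hbdef]; field_simp]
        ring
    _ = A * ((∫ y : ℝ, Real.exp (-(b * y ^ 2)))
          - ∫ y : ℝ, Real.cos (y * ξ) * Real.exp (-(b * y ^ 2))) := by
        rw [MeasureTheory.integral_const_mul, integral_sub hg hcg]
    _ = A * (Real.sqrt (Real.pi / b)
          - Real.sqrt (Real.pi / b) * Real.exp (-ξ ^ 2 / (4 * b))) := by
        rw [gauss_cos hb ξ]
        congr 2
        rw [← integral_gaussian b]
        refine integral_congr_ae (Filter.Eventually.of_forall fun y => ?_)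
        dsimp only
        rw [neg_mul]
    _ = 1 - Real.exp (-(ξ ^ 2 * s)) := by
        rw [hπb, hξb, Real.sqrt_eq_rpow]
        have h4 : (0:ℝ) < 4 * Real.pi * s := by positivity
        have hone : A * (4 * Real.pi * s) ^ ((1:ℝ)/2) = 1 := by
          rw [hA, ← Real.rpow_add h4]
          norm_num
        calc A * ((4 * Real.pi * s) ^ ((1:ℝ)/2)
              - (4 * Real.pi * s) ^ ((1:ℝ)/2) * Real.exp (-(ξ ^ 2 * s)))
            = (A * (4 * Real.pi * s) ^ ((1:ℝ)/2)) * (1 - Real.exp (-(ξ ^ 2 * s))) := by ring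
          _ = 1 - Real.exp (-(ξ ^ 2 * s)) := by rw [hone, one_mul]

/-- The Lévy–Khinchine representation of `(1+ξ²)^α` for `0 < α < 1`:
`(1+ξ²)^α = 1 + ∫_ℝ (1 − cos(yξ)) m(y) dy`. -/
theorem levy_khinchine_one_add_sq_rpow
    (α : ℝ) (hα : 0 < α) (hα' : α < 1) :
    ∀ ξ : ℝ, (1 + ξ ^ 2) ^ α = 1 + ∫ y : ℝ, (1 - Real.cos (y * ξ)) * levyDensity α y := by
  intro ξ
  have hl0 : (0:ℝ) < 1 + ξ ^ 2 := by positivity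
  set l : ℝ := 1 + ξ ^ 2 with hldef
  have hΓ : 0 < Real.Gamma (1 - α) := Real.Gamma_pos_of_pos (by linarith)
  set c : ℝ := α / Real.Gamma (1 - α) with hc
  set F : ℝ → ℝ → ℝ := fun y s => (1 - Real.cos (y * ξ)) *
      ((4 * Real.pi * s) ^ (-(1 / 2) : ℝ) * Real.exp (-y ^ 2 / (4 * s)) *
        Real.exp (-s) * s ^ (-1 - α)) with hF
  have hexp : ∀ s : ℝ, Real.exp (-(l * s)) = Real.exp (-s) * Real.exp (-(ξ ^ 2 * s)) := by
    intro s
    rw [← Real.exp_add]; congr 1; rw [hldef]; ring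
  -- rewrite integrand
  have h1 : ∀ y : ℝ, (1 - Real.cos (y * ξ)) * levyDensity α y
      = c * ∫ s in Ioi (0:ℝ), F y s := by
    intro y
    rw [levyDensity, show (1 - Real.cos (y * ξ)) * (c *
        ∫ s in Ioi (0:ℝ), (4 * Real.pi * s) ^ (-(1 / 2) : ℝ) * Real.exp (-y ^ 2 / (4 * s)) *
          Real.exp (-s) * s ^ (-1 - α))
      = c * ((1 - Real.cos (y * ξ)) *
        ∫ s in Ioi (0:ℝ), (4 * Real.pi * s) ^ (-(1 / 2) : ℝ) * Real.exp (-y ^ 2 / (4 * s)) *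
          Real.exp (-s) * s ^ (-1 - α)) from by ring,
      ← MeasureTheory.integral_const_mul]
  -- nonnegativity
  have hFnn : ∀ s : ℝ, 0 < s → ∀ y : ℝ, 0 ≤ F y s := by
    intro s hs y
    simp only [hF]
    have h2 : Real.cos (y * ξ) ≤ 1 := Real.cos_le_one _
    have h3 : (0:ℝ) ≤ (4 * Real.pi * s) ^ (-(1 / 2) : ℝ) := Real.rpow_nonneg (by positivity) _
    have h4 : (0:ℝ) ≤ s ^ (-1 - α) := Real.rpow_nonneg hs.le _
    have h5 := (Real.exp_pos (-y ^ 2 / (4 * s))).le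
    have h6 := (Real.exp_pos (-s)).le
    have h7 : (0:ℝ) ≤ 1 - Real.cos (y * ξ) := by linarith
    exact mul_nonneg h7 (mul_nonneg (mul_nonneg (mul_nonneg h3 h5) h6) h4)
  -- section integrability
  have hsec : ∀ s : ℝ, 0 < s → Integrable (fun y => F y s) := by
    intro s hs
    have hb : (0:ℝ) < (4 * s)⁻¹ := by positivity
    have hg : Integrable (fun y : ℝ => Real.exp (-((4 * s)⁻¹ * y ^ 2))) := by
      simpa [neg_mul] using integrable_exp_neg_mul_sq hb
    have h2 : Integrable (fun y : ℝ => (1 - Real.cos (y * ξ)) *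
        Real.exp (-((4 * s)⁻¹ * y ^ 2))) := by
      refine (hg.const_mul 2).mono' (by apply Measurable.aestronglyMeasurable; fun_prop) ?_
      refine Filter.Eventually.of_forall fun y => ?_
      rw [norm_mul, Real.norm_of_nonneg (Real.exp_pos _).le, Real.norm_eq_abs]
      have hc1 : |1 - Real.cos (y * ξ)| ≤ 2 := by
        have := Real.neg_one_le_cos (y * ξ)
        have := Real.cos_le_one (y * ξ)
        rw [abs_le]; constructor <;> linarith
      nlinarith [Real.exp_pos (-((4 * s)⁻¹ * y ^ 2))]
    have h3 := h2.mul_const ((4 * Real.pi * s) ^ (-(1 / 2) : ℝ) * Real.exp (-s) * s ^ (-1 - α))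
    refine h3.congr (Filter.Eventually.of_forall fun y => ?_)
    simp only [hF]
    rw [show -y ^ 2 / (4 * s) = -((4 * s)⁻¹ * y ^ 2) from by field_simp]
    ring
  -- inner integral value
  have hinner : ∀ s : ℝ, 0 < s → (∫ y : ℝ, F y s)
      = (1 - Real.exp (-(ξ ^ 2 * s))) * (Real.exp (-s) * s ^ (-1 - α)) := by
    intro s hs
    have : (fun y => F y s) = fun y => ((1 - Real.cos (y * ξ)) *
        ((4 * Real.pi * s) ^ (-(1 / 2) : ℝ) * Real.exp (-y ^ 2 / (4 * s)))) *
        (Real.exp (-s) * s ^ (-1 - α)) := by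
      funext y; simp only [hF]; ring
    rw [this, MeasureTheory.integral_mul_const, innerB hs ξ]
  -- integrability of the inner-integral function
  have hR : IntegrableOn (fun s : ℝ =>
      (1 - Real.exp (-(ξ ^ 2 * s))) * (Real.exp (-s) * s ^ (-1 - α))) (Ioi 0) := by
    have ha := integrableA hα hα' hl0.le
    have hb := integrableA hα hα' (zero_le_one (α := ℝ))
    refine (ha.sub hb).congr (Filter.Eventually.of_forall fun s => ?_)
    simp only [Pi.sub_apply]
    rw [hexp s]
    ring
  -- product integrability
  have hprod : Integrable (Function.uncurry F) (volume.prod (volume.restrict (Ioi 0))) := by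
    have hmeas : AEStronglyMeasurable (Function.uncurry F)
        (volume.prod (volume.restrict (Ioi 0))) := by
      have := (measAux α ξ).aestronglyMeasurable
        (μ := volume.prod (volume.restrict (Ioi 0)))
      exact this
    rw [MeasureTheory.integrable_prod_iff' hmeas]
    constructor
    · filter_upwards [ae_restrict_mem measurableSet_Ioi] with s hs
      exact hsec s hs
    · refine hR.congr ?_
      filter_upwards [ae_restrict_mem measurableSet_Ioi] with s hs
      rw [← hinner s hs]
      refine integral_congr_ae (Filter.Eventually.of_forall fun y => ?_)
      dsimp only [Function.uncurry]
      rw [Real.norm_of_nonneg (hFnn s hs y)]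
  have hswap : ∫ y : ℝ, ∫ s in Ioi (0:ℝ), F y s = ∫ s in Ioi (0:ℝ), ∫ y : ℝ, F y s :=
    MeasureTheory.integral_integral_swap hprod
  -- final computation
  have hfinal : ∫ s in Ioi (0:ℝ), (∫ y : ℝ, F y s)
      = Real.Gamma (1 - α) / α * (l ^ α - 1) := by
    have e1 : ∫ s in Ioi (0:ℝ), (∫ y : ℝ, F y s)
        = ∫ s in Ioi (0:ℝ), ((1 - Real.exp (-(l * s))) * s ^ (-1 - α)
            - (1 - Real.exp (-(1 * s))) * s ^ (-1 - α)) := by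
      refine integral_congr_ae ?_
      filter_upwards [ae_restrict_mem measurableSet_Ioi] with s hs
      rw [hinner s hs, hexp s, one_mul]
      ring
    rw [e1, integral_sub (integrableA hα hα' hl0.le) (integrableA hα hα' zero_le_one),
      valueA hα hα' hl0, valueA hα hα' one_pos, Real.one_rpow]
    ring
  have hmain : ∫ y : ℝ, (1 - Real.cos (y * ξ)) * levyDensity α y = l ^ α - 1 := by
    calc ∫ y : ℝ, (1 - Real.cos (y * ξ)) * levyDensity α y
        = ∫ y : ℝ, c * ∫ s in Ioi (0:ℝ), F y s :=
          integral_congr_ae (Filter.Eventually.of_forall fun y => h1 y)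
      _ = c * ∫ y : ℝ, ∫ s in Ioi (0:ℝ), F y s := MeasureTheory.integral_const_mul c _
      _ = c * ∫ s in Ioi (0:ℝ), ∫ y : ℝ, F y s := by rw [hswap]
      _ = c * (Real.Gamma (1 - α) / α * (l ^ α - 1)) := by rw [hfinal]
      _ = l ^ α - 1 := by
          rw [hc]; field_simp
  rw [hmain]; ring
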